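/- arXiv:0711.1942 — 5 statements merged into one kernel-verified Lean document; each statement's English description precedes it below -/
import Mathlib

section
/- Let u(x) be a polynomial with rational coefficients and k a positive integer. The polynomial Φ_k(u(x)) has an irreducible factor of degree φ(k) over ℚ if and only if the equation u(z) = ζ_k has a solution z ∈ ℚ(ζ_k), where ζ_k is a primitive k-th root of unity and φ is Euler's totient function. -/
open Polynomial

theorem stmt_12 (k : ℕ+) (u : ℚ[X]) :
    (∃ p : ℚ[X], Irreducible p ∧ p ∣ (cyclotomic k ℚ).comp u ∧
        p.natDegree = Nat.totient k) ↔
      (∃ ζ z : CyclotomicField k ℚ, IsPrimitiveRoot ζ (k : ℕ) ∧ aeval z u = ζ) := by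
  set K := CyclotomicField k ℚ
  haveI : NeZero (k : ℕ) := ⟨k.ne_zero⟩
  haveI : IsCyclotomicExtension {(k : ℕ)} ℚ K := by
    haveI : NeZero ((k : ℕ) : ℚ) := ⟨Nat.cast_ne_zero.mpr k.ne_zero⟩
    exact CyclotomicField.isCyclotomicExtension (k : ℕ) ℚ
  haveI : FiniteDimensional ℚ K := IsCyclotomicExtension.finiteDimensional {(k : ℕ)} ℚ K
  have hfr : Module.finrank ℚ K = Nat.totient k :=
    IsCyclotomicExtension.finrank K (cyclotomic.irreducible_rat k.pos)
  constructor
  · rintro ⟨p, hirr, hdvd, hdeg⟩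
    classical
    have hk0 : 0 < Nat.totient k := Nat.totient_pos.mpr k.pos
    have hp0 : p ≠ 0 := hirr.ne_zero
    haveI : NeZero (k : ℕ) := ⟨k.ne_zero⟩
    set Ω := AlgebraicClosure ℚ
    obtain ⟨α, hα⟩ : ∃ α : Ω, aeval α p = 0 := by
      refine IsAlgClosed.exists_aeval_eq_zero Ω p ?_
      intro h
      have := natDegree_eq_zero_iff_degree_le_zero.mpr h.le
      omega
    have hcomp : aeval α ((cyclotomic k ℚ).comp u) = 0 := by
      obtain ⟨q, hq⟩ := hdvd
      rw [hq, map_mul, hα, zero_mul]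
    set β : Ω := aeval α u with hβdef
    have hβroot : aeval β (cyclotomic (k : ℕ) ℚ) = 0 := by
      rwa [aeval_comp] at hcomp
    haveI : NeZero ((k : ℕ) : Ω) := ⟨Nat.cast_ne_zero.mpr k.ne_zero⟩
    have hβ : IsPrimitiveRoot β (k : ℕ) := by
      rw [show aeval β (cyclotomic (k : ℕ) ℚ) = eval β (cyclotomic (k : ℕ) Ω) by
        rw [← map_cyclotomic (k : ℕ) (algebraMap ℚ Ω), eval_map, aeval_def]] at hβroot
      exact (isRoot_cyclotomic_iff).mp hβroot
    let f : K →ₐ[ℚ] Ω := IsAlgClosed.lift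
    set ζ₀ : K := IsCyclotomicExtension.zeta k ℚ K with hζ₀def
    have hζ₀ : IsPrimitiveRoot ζ₀ (k : ℕ) := IsCyclotomicExtension.zeta_spec k ℚ K
    have hfζ₀ : IsPrimitiveRoot (f ζ₀) (k : ℕ) := hζ₀.map_of_injective f.injective
    obtain ⟨i, _, hi⟩ := hfζ₀.eq_pow_of_pow_eq_one hβ.pow_eq_one
    have hβeq : β = f (ζ₀ ^ i) := by rw [map_pow, hi]
    have hαint : IsIntegral ℚ α := (IsAlgebraic.isIntegral ⟨p, hp0, hα⟩)
    have hβint : IsIntegral ℚ β :=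
      (IsAlgebraic.isIntegral ⟨cyclotomic (k : ℕ) ℚ, cyclotomic_ne_zero _ ℚ, hβroot⟩)
    haveI : FiniteDimensional ℚ (IntermediateField.adjoin ℚ ({α} : Set Ω)) :=
      IntermediateField.adjoin.finiteDimensional hαint
    have hβmem : β ∈ IntermediateField.adjoin ℚ ({α} : Set Ω) :=
      IntermediateField.algebra_adjoin_le_adjoin ℚ {α}
        (Algebra.adjoin_singleton_eq_range_aeval ℚ α ▸ Set.mem_range_self u)
    have hBA : IntermediateField.adjoin ℚ ({β} : Set Ω) ≤ IntermediateField.adjoin ℚ {α} :=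
      IntermediateField.adjoin_le_iff.mpr (Set.singleton_subset_iff.mpr hβmem)
    have hfrA : Module.finrank ℚ (IntermediateField.adjoin ℚ ({α} : Set Ω)) = Nat.totient k := by
      rw [IntermediateField.adjoin.finrank hαint, ← minpoly.eq_of_irreducible hirr hα,
        natDegree_mul hp0 (by
          simpa using inv_ne_zero (leadingCoeff_ne_zero.mpr hp0)),
        natDegree_C, add_zero, hdeg]
    have hfrB : Module.finrank ℚ (IntermediateField.adjoin ℚ ({β} : Set Ω)) = Nat.totient k := by
      rw [IntermediateField.adjoin.finrank hβint, ← cyclotomic_eq_minpoly_rat hβ k.pos,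
        natDegree_cyclotomic]
    have hBAeq : IntermediateField.adjoin ℚ ({β} : Set Ω) = IntermediateField.adjoin ℚ {α} :=
      IntermediateField.eq_of_le_of_finrank_eq hBA (by rw [hfrA, hfrB])
    have hαmem : α ∈ f.fieldRange := by
      have h1 : α ∈ IntermediateField.adjoin ℚ ({β} : Set Ω) := by
        rw [hBAeq]; exact IntermediateField.mem_adjoin_simple_self ℚ α
      refine IntermediateField.adjoin_le_iff.mpr ?_ h1
      exact Set.singleton_subset_iff.mpr ⟨ζ₀ ^ i, hβeq.symm⟩
    obtain ⟨z, hzα'⟩ := hαmem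
    have hzα : f z = α := hzα'
    refine ⟨ζ₀ ^ i, z, ?_, ?_⟩
    · exact IsPrimitiveRoot.of_map_of_injective (hβeq ▸ hβ) f.injective
    · apply f.injective
      show f ((aeval z) u) = f (ζ₀ ^ i)
      rw [← aeval_algHom_apply, hzα, ← hβdef, hβeq]
  · rintro ⟨ζ, z, hζ, hz⟩
    have hint : IsIntegral ℚ z := .of_finite ℚ z
    have hζint : IsIntegral ℚ ζ := .of_finite ℚ ζ
    refine ⟨minpoly ℚ z, minpoly.irreducible hint, ?_, ?_⟩
    · apply minpoly.dvd
      rw [aeval_comp, hz]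
      have h0 := hζ.isRoot_cyclotomic k.pos
      rwa [← map_cyclotomic (k : ℕ) (algebraMap ℚ K), IsRoot, eval_map, ← aeval_def] at h0
    · have h1 : (minpoly ℚ z).natDegree ≤ Nat.totient k := hfr ▸ minpoly.natDegree_le z
      have hmem : ζ ∈ IntermediateField.adjoin ℚ ({z} : Set K) := by
        rw [← hz]
        exact IntermediateField.algebra_adjoin_le_adjoin ℚ {z}
          (Algebra.adjoin_singleton_eq_range_aeval ℚ z ▸ Set.mem_range_self u)
      have hle : IntermediateField.adjoin ℚ ({ζ} : Set K) ≤ IntermediateField.adjoin ℚ {z} :=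
        IntermediateField.adjoin_le_iff.mpr (Set.singleton_subset_iff.mpr hmem)
      have h2 : Nat.totient k ≤ (minpoly ℚ z).natDegree := by
        calc Nat.totient k = (minpoly ℚ ζ).natDegree := by
              rw [← cyclotomic_eq_minpoly_rat hζ k.pos, natDegree_cyclotomic]
          _ = Module.finrank ℚ (IntermediateField.adjoin ℚ ({ζ} : Set K)) :=
              (IntermediateField.adjoin.finrank hζint).symm
          _ ≤ Module.finrank ℚ (IntermediateField.adjoin ℚ ({z} : Set K)) :=
              LinearMap.finrank_le_finrank_of_injective
                (f := (Subalgebra.inclusion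
                  (IntermediateField.toSubalgebra_le_toSubalgebra.mpr hle)).toLinearMap)
                (Subalgebra.inclusion_injective (IntermediateField.toSubalgebra_le_toSubalgebra.mpr hle))
          _ = (minpoly ℚ z).natDegree := IntermediateField.adjoin.finrank hint
      omega
end

section
/- Let u(x) = 2x^3 + 4x^2 + 6x + 3. Then Φ₈(u(x)) = (u(x))⁴ + 1 has an irreducible factor of degree 4 over ℚ. -/
open Polynomial

private noncomputable def pAux : ℚ[X] := 2 * X ^ 4 + 4 * X ^ 3 + 6 * X ^ 2 + 4 * X + 1

private noncomputable def gAux : ℚ[X] := X ^ 4 + 4 * X ^ 3 + 6 * X ^ 2 + 4 * X + 2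

private noncomputable def gZAux : ℤ[X] := X ^ 4 + 4 * X ^ 3 + 6 * X ^ 2 + 4 * X + 2

private lemma gZAux_monic : gZAux.Monic := by
  unfold gZAux; monicity!

private lemma gZAux_irr : Irreducible gZAux := by
  apply irreducible_of_eisenstein_criterion (P := Ideal.span {(2 : ℤ)})
  · rw [Ideal.span_singleton_prime (by norm_num)]; exact Int.prime_two
  · rw [gZAux_monic.leadingCoeff]
    rw [Ideal.mem_span_singleton]
    norm_num
  · intro n hn
    have hd : gZAux.degree = 4 := by unfold gZAux; compute_degree!
    rw [hd] at hn
    have hn4 : n < 4 := by exact_mod_cast hn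
    rw [Ideal.mem_span_singleton]
    interval_cases n <;> simp [gZAux, coeff_add, coeff_X_pow, coeff_one, coeff_X] <;> decide
  · rw [show gZAux.degree = 4 by unfold gZAux; compute_degree!]
    norm_num
  · rw [Ideal.span_singleton_pow, Ideal.mem_span_singleton]
    simp [gZAux, coeff_add, coeff_X_pow, coeff_one]
  · exact gZAux_monic.isPrimitive

private lemma gAux_eq_map : gZAux.map (algebraMap ℤ ℚ) = gAux := by
  simp [gZAux, gAux, Polynomial.map_add, Polynomial.map_mul, Polynomial.map_pow,
    Polynomial.map_ofNat, Polynomial.map_one, Polynomial.map_X]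

private lemma gAux_irr : Irreducible gAux := by
  rw [← gAux_eq_map]
  exact (gZAux_monic.irreducible_iff_irreducible_map_fraction_map).mp gZAux_irr

private lemma pAux_natDegree : pAux.natDegree = 4 := by
  unfold pAux; compute_degree!

private lemma pAux_coeff_zero : pAux.coeff 0 = 1 := by
  simp [pAux, coeff_add, coeff_X_pow, coeff_one]

private lemma pAux_reverse : pAux.reverse = gAux := by
  have h4 : pAux.natDegree = 4 := pAux_natDegree
  rw [Polynomial.reverse, h4]
  have hp : pAux = C 2 * X ^ 4 + C 4 * X ^ 3 + C 6 * X ^ 2 + C 4 * X ^ 1 + C 1 * X ^ 0 := by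
    simp only [map_ofNat, C_1]; unfold pAux; ring
  rw [hp, reflect_add, reflect_add, reflect_add, reflect_add,
    reflect_C_mul_X_pow, reflect_C_mul_X_pow, reflect_C_mul_X_pow,
    reflect_C_mul_X_pow, reflect_C_mul_X_pow]
  rw [revAt_le (by norm_num), revAt_le (by norm_num), revAt_le (by norm_num),
    revAt_le (by norm_num), revAt_le (by norm_num)]
  norm_num
  simp only [map_ofNat, C_1]
  unfold gAux; ring

private lemma pAux_irr : Irreducible pAux := by
  constructor
  · intro h
    have := natDegree_eq_zero_of_isUnit h
    rw [pAux_natDegree] at this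
    omega
  · intro a b hab
    have hc : a.coeff 0 * b.coeff 0 = 1 := by
      have h := congrArg (fun q : ℚ[X] => q.coeff 0) hab
      simpa [pAux_coeff_zero, mul_coeff_zero] using h.symm
    have ha0 : a.coeff 0 ≠ 0 := fun h => by simp [h] at hc
    have hb0 : b.coeff 0 ≠ 0 := fun h => by simp [h] at hc
    have hrev : gAux = a.reverse * b.reverse := by
      rw [← pAux_reverse, hab, reverse_mul_of_domain]
    rcases gAux_irr.isUnit_or_isUnit hrev with h | h
    · left
      have hd : a.reverse.natDegree = 0 := natDegree_eq_zero_of_isUnit h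
      rw [reverse_natDegree] at hd
      have ht : a.natTrailingDegree = 0 :=
        Nat.le_zero.mp (natTrailingDegree_le_of_ne_zero ha0)
      have hda : a.natDegree = 0 := by omega
      rw [Polynomial.eq_C_of_natDegree_eq_zero hda]
      exact isUnit_C.mpr (isUnit_iff_ne_zero.mpr ha0)
    · right
      have hd : b.reverse.natDegree = 0 := natDegree_eq_zero_of_isUnit h
      rw [reverse_natDegree] at hd
      have ht : b.natTrailingDegree = 0 :=
        Nat.le_zero.mp (natTrailingDegree_le_of_ne_zero hb0)
      have hdb : b.natDegree = 0 := by omega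
      rw [Polynomial.eq_C_of_natDegree_eq_zero hdb]
      exact isUnit_C.mpr (isUnit_iff_ne_zero.mpr hb0)

theorem stmt_13 :
    ∃ p : ℚ[X], Irreducible p ∧ p.natDegree = 4 ∧
      p ∣ (2 * X ^ 3 + 4 * X ^ 2 + 6 * X + 3 : ℚ[X]) ^ 4 + 1 := by
  refine ⟨pAux, pAux_irr, pAux_natDegree, ?_⟩
  refine ⟨8 * X ^ 8 + 48 * X ^ 7 + 168 * X ^ 6 + 384 * X ^ 5 + 628 * X ^ 4 + 736 * X ^ 3
    + 604 * X ^ 2 + 320 * X + 82, ?_⟩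
  unfold pAux
  ring
end

section
/- Let u(x) = 9x^3 + 3x^2 + 2x + 1. Then Φ₈(u(x)) has an irreducible factor of degree 4 over ℚ. -/
open Polynomial

/-- The Eisenstein polynomial `t⁴ + 2t² + 4t + 2` over `ℤ`. -/
noncomputable def gZ : ℤ[X] := X ^ 4 + 2 * X ^ 2 + 4 * X + 2

lemma gZ_natDegree : gZ.natDegree = 4 := by
  unfold gZ; compute_degree!

lemma gZ_monic : gZ.Monic := by
  unfold gZ; monicity!

lemma gZ_irreducible : Irreducible gZ := by
  apply Polynomial.irreducible_of_eisenstein_criterion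
    (P := Ideal.span {(2 : ℤ)})
  · exact Ideal.span_singleton_prime (by norm_num) |>.2 Int.prime_two
  · rw [gZ_monic.leadingCoeff, Ideal.mem_span_singleton]
    norm_num
  · intro n hn
    rw [degree_eq_natDegree gZ_monic.ne_zero, gZ_natDegree] at hn
    rw [Ideal.mem_span_singleton]
    have hn' : n < 4 := by exact_mod_cast hn
    interval_cases n <;> simp [gZ, coeff_one, coeff_X] <;> decide
  · rw [degree_eq_natDegree gZ_monic.ne_zero, gZ_natDegree]; norm_num
  · rw [Ideal.span_singleton_pow, Ideal.mem_span_singleton]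
    simp [gZ, coeff_one, coeff_X]
  · exact gZ_monic.isPrimitive

lemma gQ_irreducible : Irreducible (gZ.map (Int.castRingHom ℚ)) :=
  (gZ_monic.irreducible_iff_irreducible_map_fraction_map (K := ℚ)).1 gZ_irreducible

/-- The substitution `X ↦ 3X + 1` as an algebra automorphism of `ℚ[X]`. -/
noncomputable def φ : ℚ[X] ≃ₐ[ℚ] ℚ[X] :=
  AlgEquiv.ofAlgHom (aeval (C 3 * X + C 1)) (aeval (C (1/3) * X - C (1/3)))
    (by
      ext : 1
      simp only [AlgHom.coe_comp, Function.comp_apply, aeval_X, map_add, map_mul, map_sub,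
        aeval_C, algebraMap_eq, AlgHom.coe_id, id_eq, C_1, map_one]
      have h3 : (C (1/3) : ℚ[X]) * C 3 = 1 := by rw [← C_mul]; norm_num
      linear_combination (X : ℚ[X]) * h3)
    (by
      ext : 1
      simp only [AlgHom.coe_comp, Function.comp_apply, aeval_X, map_add, map_mul, map_sub,
        aeval_C, algebraMap_eq, AlgHom.coe_id, id_eq, C_1, map_one]
      have h3 : (C (1/3) : ℚ[X]) * C 3 = 1 := by rw [← C_mul]; norm_num
      linear_combination ((X : ℚ[X]) - 1) * h3)

theorem stmt_14 :
    ∃ p : ℚ[X], Irreducible p ∧ p.natDegree = 4 ∧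
      p ∣ (9 * X ^ 3 + 3 * X ^ 2 + 2 * X + 1 : ℚ[X]) ^ 4 + 1 := by
  refine ⟨9 * X ^ 4 + 12 * X ^ 3 + 8 * X ^ 2 + 4 * X + 1, ?_, by compute_degree!, ?_⟩
  · have key : φ (gZ.map (Int.castRingHom ℚ)) =
        9 * (9 * X ^ 4 + 12 * X ^ 3 + 8 * X ^ 2 + 4 * X + 1) := by
      simp only [gZ, Polynomial.map_add, Polynomial.map_mul, Polynomial.map_pow,
        Polynomial.map_X, Polynomial.map_ofNat, φ, AlgEquiv.ofAlgHom_apply,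
        map_add, map_mul, map_pow, aeval_X, aeval_C, map_ofNat, C_1]
      ring
    have h9 : IsUnit (9 : ℚ[X]) := by
      have : (9 : ℚ[X]) = C 9 := (map_ofNat C 9).symm
      rw [this, Polynomial.isUnit_C]
      norm_num
    have := (MulEquiv.irreducible_iff (φ : ℚ[X] ≃* ℚ[X])).2 gQ_irreducible
    rw [show ((φ : ℚ[X] ≃* ℚ[X]) (gZ.map (Int.castRingHom ℚ))) =
        φ (gZ.map (Int.castRingHom ℚ)) from rfl, key,
      irreducible_isUnit_mul h9] at this
    exact this
  · exact ⟨729 * X ^ 8 + 486 * X ^ 6 + 108 * X ^ 5 + 108 * X ^ 4 + 36 * X ^ 3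
      + 20 * X ^ 2 + 2, by ring⟩
end

section
/- Let ω = a₀ + a₁ζ₈ + a₂ζ₈² + a₃ζ₈³ with a_i ∈ ℚ, where ζ₈ is a primitive 8th root of unity. Define d = (a₁² + a₃²)((a₁ − a₃)² + 2a₂²)((a₁ + a₃)² − 2a₂²) and n₃ = a₃³ − a₁²a₃ + 2a₁a₂². If d ≠ 0 and n₃ ≠ 0, then there exists a unique cubic polynomial u(x) ∈ ℚ[x] (with nonzero leading coefficient) such that u(ω) = ζ₈. -/
open Polynomial

lemma cf_smul_def (q : ℚ) (x : CyclotomicField 8 ℚ) : q • x = algebraMap ℚ (CyclotomicField 8 ℚ) q * x :=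
  Algebra.smul_def q x

lemma indep8 (ζ : CyclotomicField 8 ℚ) (hζ : IsPrimitiveRoot ζ 8) (q₀ q₁ q₂ q₃ : ℚ)
    (h : q₀ • (1 : CyclotomicField 8 ℚ) + q₁ • ζ + q₂ • ζ ^ 2 + q₃ • ζ ^ 3 = 0) :
    q₀ = 0 ∧ q₁ = 0 ∧ q₂ = 0 ∧ q₃ = 0 := by
  set p : ℚ[X] := C q₀ + C q₁ * X + C q₂ * X ^ 2 + C q₃ * X ^ 3 with hp
  have hmin : minpoly ℚ ζ = cyclotomic 8 ℚ := (cyclotomic_eq_minpoly_rat hζ (by norm_num)).symm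
  have haev : aeval ζ p = 0 := by
    rw [hp]
    simp only [map_add, map_mul, map_pow, aeval_C, aeval_X]
    rw [← h]
    simp only [cf_smul_def, Algebra.smul_def, mul_one]
  have hp0 : p = 0 := by
    by_contra hne
    have hle := minpoly.degree_le_of_ne_zero ℚ ζ hne haev
    have hdp : p.degree ≤ 3 := by rw [hp]; compute_degree
    rw [hmin, degree_cyclotomic, show Nat.totient 8 = 4 from rfl] at hle
    have := hle.trans hdp
    norm_num at this
  refine ⟨?_, ?_, ?_, ?_⟩
  · have := congrArg (fun r => Polynomial.coeff r 0) hp0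
    simpa [hp, coeff_C] using this
  · have := congrArg (fun r => Polynomial.coeff r 1) hp0
    simpa [hp, coeff_C, coeff_X] using this
  · have := congrArg (fun r => Polynomial.coeff r 2) hp0
    simpa [hp, coeff_C, coeff_X, coeff_X_pow] using this
  · have := congrArg (fun r => Polynomial.coeff r 3) hp0
    simpa [hp, coeff_C, coeff_X, coeff_X_pow] using this

set_option maxHeartbeats 2000000 in
theorem stmt_15 (ζ : CyclotomicField 8 ℚ) (hζ : IsPrimitiveRoot ζ 8)
    (a₀ a₁ a₂ a₃ : ℚ)
    (hd : (a₁ ^ 2 + a₃ ^ 2) * ((a₁ - a₃) ^ 2 + 2 * a₂ ^ 2) *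
        ((a₁ + a₃) ^ 2 - 2 * a₂ ^ 2) ≠ 0)
    (hn : a₃ ^ 3 - a₁ ^ 2 * a₃ + 2 * a₁ * a₂ ^ 2 ≠ 0) :
    ∃! u : ℚ[X], u.natDegree = 3 ∧
      aeval (a₀ • (1 : CyclotomicField 8 ℚ) + a₁ • ζ + a₂ • ζ ^ 2 + a₃ • ζ ^ 3) u = ζ := by
  have h8 : ζ ^ 8 = 1 := hζ.pow_eq_one
  have h4 : ζ ^ 4 ≠ 1 := hζ.pow_ne_one_of_pos_of_lt (by norm_num) (by norm_num)
  have hζ4 : ζ ^ 4 = -1 := by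
    rcases mul_eq_zero.mp (show (ζ ^ 4 - 1) * (ζ ^ 4 + 1) = 0 by linear_combination h8) with hh | hh
    · exact absurd (by linear_combination hh) h4
    · linear_combination hh
  set c₀ : ℚ := ((-3)*a₂*a₃^5 + 2*a₂^5*a₃ + (-5)*a₁*a₂^3*a₃^2 + 5*a₁^3*a₂^3 + (-5)*a₁^4*a₂*a₃ + (-3)*a₀*a₂^2*a₃^3 + (-3)*a₀*a₁*a₃^4 + (-2)*a₀*a₁*a₂^4 + (-9)*a₀*a₁^2*a₂^2*a₃ + 4*a₀*a₁^3*a₃^2 + (-1)*a₀*a₁^5 + 2*a₀^2*a₂^3*a₃ + (-3)*a₀^2*a₁*a₂*a₃^2 + (-1)*a₀^2*a₁^3*a₂ + (-1)*a₀^3*a₃^3 + (-2)*a₀^3*a₁*a₂^2 + a₀^3*a₁^2*a₃) / ((a₁ ^ 2 + a₃ ^ 2) * ((a₁ - a₃) ^ 2 + 2 * a₂ ^ 2) * ((a₁ + a₃) ^ 2 - 2 * a₂ ^ 2)) with hc0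
  set c₁ : ℚ := (3*a₂^2*a₃^3 + 3*a₁*a₃^4 + 2*a₁*a₂^4 + 9*a₁^2*a₂^2*a₃ + (-4)*a₁^3*a₃^2 + a₁^5 + (-4)*a₀*a₂^3*a₃ + 6*a₀*a₁*a₂*a₃^2 + 2*a₀*a₁^3*a₂ + 3*a₀^2*a₃^3 + 6*a₀^2*a₁*a₂^2 + (-3)*a₀^2*a₁^2*a₃) / ((a₁ ^ 2 + a₃ ^ 2) * ((a₁ - a₃) ^ 2 + 2 * a₂ ^ 2) * ((a₁ + a₃) ^ 2 - 2 * a₂ ^ 2)) with hc1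
  set c₂ : ℚ := (2*a₂^3*a₃ + (-3)*a₁*a₂*a₃^2 + (-1)*a₁^3*a₂ + (-3)*a₀*a₃^3 + (-6)*a₀*a₁*a₂^2 + 3*a₀*a₁^2*a₃) / ((a₁ ^ 2 + a₃ ^ 2) * ((a₁ - a₃) ^ 2 + 2 * a₂ ^ 2) * ((a₁ + a₃) ^ 2 - 2 * a₂ ^ 2)) with hc2
  set c₃ : ℚ := (a₃ ^ 3 - a₁ ^ 2 * a₃ + 2 * a₁ * a₂ ^ 2) / ((a₁ ^ 2 + a₃ ^ 2) * ((a₁ - a₃) ^ 2 + 2 * a₂ ^ 2) * ((a₁ + a₃) ^ 2 - 2 * a₂ ^ 2)) with hc3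
  have hrel0 : c₀ * ((a₁ ^ 2 + a₃ ^ 2) * ((a₁ - a₃) ^ 2 + 2 * a₂ ^ 2) * ((a₁ + a₃) ^ 2 - 2 * a₂ ^ 2)) = ((-3)*a₂*a₃^5 + 2*a₂^5*a₃ + (-5)*a₁*a₂^3*a₃^2 + 5*a₁^3*a₂^3 + (-5)*a₁^4*a₂*a₃ + (-3)*a₀*a₂^2*a₃^3 + (-3)*a₀*a₁*a₃^4 + (-2)*a₀*a₁*a₂^4 + (-9)*a₀*a₁^2*a₂^2*a₃ + 4*a₀*a₁^3*a₃^2 + (-1)*a₀*a₁^5 + 2*a₀^2*a₂^3*a₃ + (-3)*a₀^2*a₁*a₂*a₃^2 + (-1)*a₀^2*a₁^3*a₂ + (-1)*a₀^3*a₃^3 + (-2)*a₀^3*a₁*a₂^2 + a₀^3*a₁^2*a₃) := by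
    rw [hc0]; exact div_mul_cancel₀ _ hd
  have hrel0' := congrArg (algebraMap ℚ (CyclotomicField 8 ℚ)) hrel0
  simp only [map_mul, map_add, map_sub, map_pow, map_ofNat, map_one, map_neg, map_div₀] at hrel0'
  have hrel1 : c₁ * ((a₁ ^ 2 + a₃ ^ 2) * ((a₁ - a₃) ^ 2 + 2 * a₂ ^ 2) * ((a₁ + a₃) ^ 2 - 2 * a₂ ^ 2)) = (3*a₂^2*a₃^3 + 3*a₁*a₃^4 + 2*a₁*a₂^4 + 9*a₁^2*a₂^2*a₃ + (-4)*a₁^3*a₃^2 + a₁^5 + (-4)*a₀*a₂^3*a₃ + 6*a₀*a₁*a₂*a₃^2 + 2*a₀*a₁^3*a₂ + 3*a₀^2*a₃^3 + 6*a₀^2*a₁*a₂^2 + (-3)*a₀^2*a₁^2*a₃) := by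
    rw [hc1]; exact div_mul_cancel₀ _ hd
  have hrel1' := congrArg (algebraMap ℚ (CyclotomicField 8 ℚ)) hrel1
  simp only [map_mul, map_add, map_sub, map_pow, map_ofNat, map_one, map_neg, map_div₀] at hrel1'
  have hrel2 : c₂ * ((a₁ ^ 2 + a₃ ^ 2) * ((a₁ - a₃) ^ 2 + 2 * a₂ ^ 2) * ((a₁ + a₃) ^ 2 - 2 * a₂ ^ 2)) = (2*a₂^3*a₃ + (-3)*a₁*a₂*a₃^2 + (-1)*a₁^3*a₂ + (-3)*a₀*a₃^3 + (-6)*a₀*a₁*a₂^2 + 3*a₀*a₁^2*a₃) := by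
    rw [hc2]; exact div_mul_cancel₀ _ hd
  have hrel2' := congrArg (algebraMap ℚ (CyclotomicField 8 ℚ)) hrel2
  simp only [map_mul, map_add, map_sub, map_pow, map_ofNat, map_one, map_neg, map_div₀] at hrel2'
  have hrel3 : c₃ * ((a₁ ^ 2 + a₃ ^ 2) * ((a₁ - a₃) ^ 2 + 2 * a₂ ^ 2) * ((a₁ + a₃) ^ 2 - 2 * a₂ ^ 2)) = (a₃ ^ 3 - a₁ ^ 2 * a₃ + 2 * a₁ * a₂ ^ 2) := by
    rw [hc3]; exact div_mul_cancel₀ _ hd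
  have hrel3' := congrArg (algebraMap ℚ (CyclotomicField 8 ℚ)) hrel3
  simp only [map_mul, map_add, map_sub, map_pow, map_ofNat, map_one, map_neg, map_div₀] at hrel3'
  have hfD : algebraMap ℚ (CyclotomicField 8 ℚ) ((a₁ ^ 2 + a₃ ^ 2) * ((a₁ - a₃) ^ 2 + 2 * a₂ ^ 2) * ((a₁ + a₃) ^ 2 - 2 * a₂ ^ 2)) ≠ 0 :=
    fun hh => hd ((algebraMap ℚ (CyclotomicField 8 ℚ)).injective (by rw [hh, map_zero]))
  refine ⟨C c₀ + C c₁ * X + C c₂ * X ^ 2 + C c₃ * X ^ 3, ⟨?_, ?_⟩, fun v hv => ?_⟩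
  · have hform : C c₀ + C c₁ * X + C c₂ * X ^ 2 + C c₃ * X ^ 3
        = C c₃ * X ^ 3 + C c₂ * X ^ 2 + C c₁ * X + C c₀ := by ring
    rw [hform, natDegree_cubic (by rw [hc3]; exact div_ne_zero hn hd)]
  · refine mul_left_cancel₀ hfD ?_
    simp only [map_add, map_mul, map_pow, map_sub, map_ofNat, map_one, map_neg, aeval_C, aeval_X,
      cf_smul_def, Algebra.smul_def, mul_one]
    linear_combination (1:CyclotomicField 8 ℚ)*hrel0' + (algebraMap ℚ (CyclotomicField 8 ℚ) a₀ + algebraMap ℚ (CyclotomicField 8 ℚ) a₁*ζ + algebraMap ℚ (CyclotomicField 8 ℚ) a₂*ζ^2 + algebraMap ℚ (CyclotomicField 8 ℚ) a₃*ζ^3)*hrel1' + (algebraMap ℚ (CyclotomicField 8 ℚ) a₀ + algebraMap ℚ (CyclotomicField 8 ℚ) a₁*ζ + algebraMap ℚ (CyclotomicField 8 ℚ) a₂*ζ^2 + algebraMap ℚ (CyclotomicField 8 ℚ) a₃*ζ^3)^2*hrel2' + (algebraMap ℚ (CyclotomicField 8 ℚ) a₀ + algebraMap ℚ (CyclotomicField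 8 ℚ) a₁*ζ + algebraMap ℚ (CyclotomicField 8 ℚ) a₂*ζ^2 + algebraMap ℚ (CyclotomicField 8 ℚ) a₃*ζ^3)^3*hrel3' + (((-3)*(algebraMap ℚ (CyclotomicField 8 ℚ) a₂)*(algebraMap ℚ (CyclotomicField 8 ℚ) a₃)^5 + 2*(algebraMap ℚ (CyclotomicField 8 ℚ) a₂)^5*(algebraMap ℚ (CyclotomicField 8 ℚ) a₃) + (-5)*(algebraMap ℚ (CyclotomicField 8 ℚ) a₁)*(algebraMap ℚ (CyclotomicField 8 ℚ) a₂)^3*(algebraMap ℚ (CyclotomicField 8 ℚ) a₃)^2 + 5*(algebraMap ℚ (CyclotomicField 8 ℚ) a₁)^3*(algebraMap ℚ (CyclotomicField 8 ℚ) a₂)^3 + (-5)*(algebraMap ℚ (CyclotomicField 8 ℚ) a₁)^4*(algebraMap ℚ (CyclotomicField 8 ℚ) a₂)*(algebraMap ℚ (CyclotomicField 8 ℚ) a₃)) + ((-1)*(algebraMap ℚ (CyclotomicField 8 ℚ) a₃)^6 + 4*(algebraMap ℚ (CyclotomicField 8 ℚ) a₂)^4*(algebraMap ℚ (CyclotomicField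 8 ℚ) a₃)^2 + (-5)*(algebraMap ℚ (CyclotomicField 8 ℚ) a₁)*(algebraMap ℚ (CyclotomicField 8 ℚ) a₂)^2*(algebraMap ℚ (CyclotomicField 8 ℚ) a₃)^3 + 4*(algebraMap ℚ (CyclotomicField 8 ℚ) a₁)^2*(algebraMap ℚ (CyclotomicField 8 ℚ) a₃)^4 + 6*(algebraMap ℚ (CyclotomicField 8 ℚ) a₁)^2*(algebraMap ℚ (CyclotomicField 8 ℚ) a₂)^4 + (algebraMap ℚ (CyclotomicField 8 ℚ) a₁)^3*(algebraMap ℚ (CyclotomicField 8 ℚ) a₂)^2*(algebraMap ℚ (CyclotomicField 8 ℚ) a₃) + (-3)*(algebraMap ℚ (CyclotomicField 8 ℚ) a₁)^4*(algebraMap ℚ (CyclotomicField 8 ℚ) a₃)^2)*ζ + (3*(algebraMap ℚ (CyclotomicField 8 ℚ) a₂)^3*(algebraMap ℚ (CyclotomicField 8 ℚ) a₃)^3 + 3*(algebraMap ℚ (CyclotomicField 8 ℚ) a₁)*(algebraMap ℚ (CyclotomicField 8 ℚ) a₂)*(algebraMap ℚ (CyclotomicField 8 ℚ) a₃)^4 +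 2*(algebraMap ℚ (CyclotomicField 8 ℚ) a₁)*(algebraMap ℚ (CyclotomicField 8 ℚ) a₂)^5 + 11*(algebraMap ℚ (CyclotomicField 8 ℚ) a₁)^2*(algebraMap ℚ (CyclotomicField 8 ℚ) a₂)^3*(algebraMap ℚ (CyclotomicField 8 ℚ) a₃) + (-7)*(algebraMap ℚ (CyclotomicField 8 ℚ) a₁)^3*(algebraMap ℚ (CyclotomicField 8 ℚ) a₂)*(algebraMap ℚ (CyclotomicField 8 ℚ) a₃)^2)*ζ^2 + (3*(algebraMap ℚ (CyclotomicField 8 ℚ) a₂)^2*(algebraMap ℚ (CyclotomicField 8 ℚ) a₃)^4 + 3*(algebraMap ℚ (CyclotomicField 8 ℚ) a₁)*(algebraMap ℚ (CyclotomicField 8 ℚ) a₃)^5 + 6*(algebraMap ℚ (CyclotomicField 8 ℚ) a₁)*(algebraMap ℚ (CyclotomicField 8 ℚ) a₂)^4*(algebraMap ℚ (CyclotomicField 8 ℚ) a₃) + 3*(algebraMap ℚ (CyclotomicField 8 ℚ) a₁)^2*(algebraMap ℚ (CyclotomicField 8 ℚ) a₂)^2*(algebraMap ℚ (CyclotomicField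 8 ℚ) a₃)^2 + (-3)*(algebraMap ℚ (CyclotomicField 8 ℚ) a₁)^3*(algebraMap ℚ (CyclotomicField 8 ℚ) a₃)^3)*ζ^3 + (3*(algebraMap ℚ (CyclotomicField 8 ℚ) a₂)*(algebraMap ℚ (CyclotomicField 8 ℚ) a₃)^5 + 6*(algebraMap ℚ (CyclotomicField 8 ℚ) a₁)*(algebraMap ℚ (CyclotomicField 8 ℚ) a₂)^3*(algebraMap ℚ (CyclotomicField 8 ℚ) a₃)^2 + (-3)*(algebraMap ℚ (CyclotomicField 8 ℚ) a₁)^2*(algebraMap ℚ (CyclotomicField 8 ℚ) a₂)*(algebraMap ℚ (CyclotomicField 8 ℚ) a₃)^3)*ζ^4 + ((algebraMap ℚ (CyclotomicField 8 ℚ) a₃)^6 + 2*(algebraMap ℚ (CyclotomicField 8 ℚ) a₁)*(algebraMap ℚ (CyclotomicField 8 ℚ) a₂)^2*(algebraMap ℚ (CyclotomicField 8 ℚ) a₃)^3 + (-1)*(algebraMap ℚ (CyclotomicField 8 ℚ) a₁)^2*(algebraMap ℚ (CyclotomicField 8 ℚ) a₃)^4)*ζ^5)*hζ4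
  · obtain ⟨hv3, hve⟩ := hv
    have hvrep : v = C (v.coeff 0) + C (v.coeff 1) * X + C (v.coeff 2) * X ^ 2 + C (v.coeff 3) * X ^ 3 := by
      conv_lhs => rw [Polynomial.as_sum_range' v 4 (by rw [hv3]; norm_num)]
      rw [Finset.sum_range_succ, Finset.sum_range_succ, Finset.sum_range_succ, Finset.sum_range_one]
      simp only [← Polynomial.C_mul_X_pow_eq_monomial, pow_zero, pow_one, mul_one]
    have hve2 : algebraMap ℚ (CyclotomicField 8 ℚ) (v.coeff 0) + algebraMap ℚ (CyclotomicField 8 ℚ) (v.coeff 1) * (algebraMap ℚ (CyclotomicField 8 ℚ) a₀ + algebraMap ℚ (CyclotomicField 8 ℚ) a₁ * ζ + algebraMap ℚ (CyclotomicField 8 ℚ) a₂ * ζ^2 + algebraMap ℚ (CyclotomicField 8 ℚ) a₃ * ζ^3)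
        + algebraMap ℚ (CyclotomicField 8 ℚ) (v.coeff 2) * (algebraMap ℚ (CyclotomicField 8 ℚ) a₀ + algebraMap ℚ (CyclotomicField 8 ℚ) a₁ * ζ + algebraMap ℚ (CyclotomicField 8 ℚ) a₂ * ζ^2 + algebraMap ℚ (CyclotomicField 8 ℚ) a₃ * ζ^3)^2
        + algebraMap ℚ (CyclotomicField 8 ℚ) (v.coeff 3) * (algebraMap ℚ (CyclotomicField 8 ℚ) a₀ + algebraMap ℚ (CyclotomicField 8 ℚ) a₁ * ζ + algebraMap ℚ (CyclotomicField 8 ℚ) a₂ * ζ^2 + algebraMap ℚ (CyclotomicField 8 ℚ) a₃ * ζ^3)^3 = ζ := by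
      conv_rhs => rw [← hve, hvrep]
      simp only [map_add, map_mul, map_pow, aeval_C, aeval_X, cf_smul_def, Algebra.smul_def, mul_one]
      all_goals ring
    obtain ⟨hq0, hq1, hq2, hq3⟩ := indep8 ζ hζ ((v.coeff 0) + 3*a₂*a₃^2*(v.coeff 3) + (-1)*a₂^2*(v.coeff 2) + (-2)*a₁*a₃*(v.coeff 2) + (-3)*a₁^2*a₂*(v.coeff 3) + a₀*(v.coeff 1) + (-3)*a₀*a₂^2*(v.coeff 3) + (-6)*a₀*a₁*a₃*(v.coeff 3) + a₀^2*(v.coeff 2) + a₀^3*(v.coeff 3)) ((-1) + a₃^3*(v.coeff 3) + (-2)*a₂*a₃*(v.coeff 2) + a₁*(v.coeff 1) + (-3)*a₁*a₂^2*(v.coeff 3) + (-3)*a₁^2*a₃*(v.coeff 3) + (-6)*a₀*a₂*a₃*(v.coeff 3) + 2*a₀*a₁*(v.coeff 2) + 3*a₀^2*a₁*(v.coeff 3)) ((-1)*a₃^2*(v.coeff 2) + a₂*(v.coeff 1) + (-1)*a₂^3*(v.coeff 3) + (-6)*a₁*a₂*a₃*(v.coeff 3) + a₁^2*(v.coeff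 2) + (-3)*a₀*a₃^2*(v.coeff 3) + 2*a₀*a₂*(v.coeff 2) + 3*a₀*a₁^2*(v.coeff 3) + 3*a₀^2*a₂*(v.coeff 3)) (a₃*(v.coeff 1) + (-3)*a₂^2*a₃*(v.coeff 3) + (-3)*a₁*a₃^2*(v.coeff 3) + 2*a₁*a₂*(v.coeff 2) + a₁^3*(v.coeff 3) + 2*a₀*a₃*(v.coeff 2) + 6*a₀*a₁*a₂*(v.coeff 3) + 3*a₀^2*a₃*(v.coeff 3)) (by
      simp only [cf_smul_def, Algebra.smul_def, map_add, map_sub, map_mul, map_pow, map_ofNat, map_one, map_neg, mul_one]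
      linear_combination hve2 + ((3*(algebraMap ℚ (CyclotomicField 8 ℚ) a₂)*(algebraMap ℚ (CyclotomicField 8 ℚ) a₃)^2*(algebraMap ℚ (CyclotomicField 8 ℚ) (v.coeff 3)) + (-1)*(algebraMap ℚ (CyclotomicField 8 ℚ) a₂)^2*(algebraMap ℚ (CyclotomicField 8 ℚ) (v.coeff 2)) + (-2)*(algebraMap ℚ (CyclotomicField 8 ℚ) a₁)*(algebraMap ℚ (CyclotomicField 8 ℚ) a₃)*(algebraMap ℚ (CyclotomicField 8 ℚ) (v.coeff 2)) + (-3)*(algebraMap ℚ (CyclotomicField 8 ℚ) a₁)^2*(algebraMap ℚ (CyclotomicField 8 ℚ) a₂)*(algebraMap ℚ (CyclotomicField 8 ℚ) (v.coeff 3)) + (-3)*(algebraMap ℚ (CyclotomicField 8 ℚ) a₀)*(algebraMap ℚ (CyclotomicField 8 ℚ) a₂)^2*(algebraMap ℚ (CyclotomicField 8 ℚ) (v.coeff 3)) + (-6)*(algebraMap ℚ (CyclotomicField 8 ℚ) a₀)*(algebraMap ℚ (CyclotomicField 8 ℚ) a₁)*(algebraMap ℚ (CyclotomicField 8 ℚ)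 a₃)*(algebraMap ℚ (CyclotomicField 8 ℚ) (v.coeff 3))) + ((algebraMap ℚ (CyclotomicField 8 ℚ) a₃)^3*(algebraMap ℚ (CyclotomicField 8 ℚ) (v.coeff 3)) + (-2)*(algebraMap ℚ (CyclotomicField 8 ℚ) a₂)*(algebraMap ℚ (CyclotomicField 8 ℚ) a₃)*(algebraMap ℚ (CyclotomicField 8 ℚ) (v.coeff 2)) + (-3)*(algebraMap ℚ (CyclotomicField 8 ℚ) a₁)*(algebraMap ℚ (CyclotomicField 8 ℚ) a₂)^2*(algebraMap ℚ (CyclotomicField 8 ℚ) (v.coeff 3)) + (-3)*(algebraMap ℚ (CyclotomicField 8 ℚ) a₁)^2*(algebraMap ℚ (CyclotomicField 8 ℚ) a₃)*(algebraMap ℚ (CyclotomicField 8 ℚ) (v.coeff 3)) + (-6)*(algebraMap ℚ (CyclotomicField 8 ℚ) a₀)*(algebraMap ℚ (CyclotomicField 8 ℚ) a₂)*(algebraMap ℚ (CyclotomicField 8 ℚ) a₃)*(algebraMap ℚ (CyclotomicField 8 ℚ) (v.coeff 3)))*ζ + ((-1)*(algebraMap ℚ (CyclotomicField 8 ℚ)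 a₃)^2*(algebraMap ℚ (CyclotomicField 8 ℚ) (v.coeff 2)) + (-1)*(algebraMap ℚ (CyclotomicField 8 ℚ) a₂)^3*(algebraMap ℚ (CyclotomicField 8 ℚ) (v.coeff 3)) + (-6)*(algebraMap ℚ (CyclotomicField 8 ℚ) a₁)*(algebraMap ℚ (CyclotomicField 8 ℚ) a₂)*(algebraMap ℚ (CyclotomicField 8 ℚ) a₃)*(algebraMap ℚ (CyclotomicField 8 ℚ) (v.coeff 3)) + (-3)*(algebraMap ℚ (CyclotomicField 8 ℚ) a₀)*(algebraMap ℚ (CyclotomicField 8 ℚ) a₃)^2*(algebraMap ℚ (CyclotomicField 8 ℚ) (v.coeff 3)))*ζ^2 + ((-3)*(algebraMap ℚ (CyclotomicField 8 ℚ) a₂)^2*(algebraMap ℚ (CyclotomicField 8 ℚ) a₃)*(algebraMap ℚ (CyclotomicField 8 ℚ) (v.coeff 3)) + (-3)*(algebraMap ℚ (CyclotomicField 8 ℚ) a₁)*(algebraMap ℚ (CyclotomicField 8 ℚ) a₃)^2*(algebraMap ℚ (CyclotomicField 8 ℚ) (v.coeff 3)))*ζ^3 + ((-3)*(algebraMap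 ℚ (CyclotomicField 8 ℚ) a₂)*(algebraMap ℚ (CyclotomicField 8 ℚ) a₃)^2*(algebraMap ℚ (CyclotomicField 8 ℚ) (v.coeff 3)))*ζ^4 + ((-1)*(algebraMap ℚ (CyclotomicField 8 ℚ) a₃)^3*(algebraMap ℚ (CyclotomicField 8 ℚ) (v.coeff 3)))*ζ^5)*hζ4)
    have hb0 : v.coeff 0 = c₀ := by
      rw [hc0, eq_div_iff hd]
      linear_combination (a₃^6 + (-4)*a₂^4*a₃^2 + 8*a₁*a₂^2*a₃^3 + (-1)*a₁^2*a₃^4 + (-4)*a₁^2*a₂^4 + 8*a₁^3*a₂^2*a₃ + (-1)*a₁^4*a₃^2 + a₁^6) * hq0 + ((-3)*a₂*a₃^5 + 2*a₂^5*a₃ + (-5)*a₁*a₂^3*a₃^2 + 5*a₁^3*a₂^3 + (-5)*a₁^4*a₂*a₃ + (-3)*a₀*a₂^2*a₃^3 + (-3)*a₀*a₁*a₃^4 + (-2)*a₀*a₁*a₂^4 + (-9)*a₀*a₁^2*a₂^2*a₃ + 4*a₀*a₁^3*a₃^2 + (-1)*a₀*a₁^5 + 2*a₀^2*a₂^3*a₃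 + (-3)*a₀^2*a₁*a₂*a₃^2 + (-1)*a₀^2*a₁^3*a₂ + (-1)*a₀^3*a₃^3 + (-2)*a₀^3*a₁*a₂^2 + a₀^3*a₁^2*a₃) * hq1 + (5*a₂^2*a₃^4 + (-2)*a₁*a₃^5 + (-5)*a₁^4*a₂^2 + 2*a₁^5*a₃ + 6*a₀*a₂^3*a₃^2 + 4*a₀*a₁*a₂*a₃^3 + 6*a₀*a₁^2*a₂^3 + 4*a₀*a₁^3*a₂*a₃ + (-1)*a₀^2*a₃^4 + a₀^2*a₁^4 + 2*a₀^3*a₂*a₃^2 + 2*a₀^3*a₁^2*a₂) * hq2 + ((-5)*a₂^3*a₃^3 + 5*a₁*a₂*a₃^4 + (-2)*a₁*a₂^5 + 5*a₁^2*a₂^3*a₃ + 3*a₁^5*a₂ + (-1)*a₀*a₃^5 + (-2)*a₀*a₂^4*a₃ + (-9)*a₀*a₁*a₂^2*a₃^2 + 4*a₀*a₁^2*a₃^3 + (-3)*a₀*a₁^3*a₂^2 + (-3)*a₀*a₁^4*a₃ + a₀^2*a₂*a₃^3 + (-2)*a₀^2*a₁*a₂^3 + 3*a₀^2*a₁^2*a₂*a₃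 + (-2)*a₀^3*a₂^2*a₃ + a₀^3*a₁*a₃^2 + (-1)*a₀^3*a₁^3) * hq3
    have hb1 : v.coeff 1 = c₁ := by
      rw [hc1, eq_div_iff hd]
      linear_combination (3*a₂^2*a₃^3 + 3*a₁*a₃^4 + 2*a₁*a₂^4 + 9*a₁^2*a₂^2*a₃ + (-4)*a₁^3*a₃^2 + a₁^5 + (-4)*a₀*a₂^3*a₃ + 6*a₀*a₁*a₂*a₃^2 + 2*a₀*a₁^3*a₂ + 3*a₀^2*a₃^3 + 6*a₀^2*a₁*a₂^2 + (-3)*a₀^2*a₁^2*a₃) * hq1 + ((-6)*a₂^3*a₃^2 + (-4)*a₁*a₂*a₃^3 + (-6)*a₁^2*a₂^3 + (-4)*a₁^3*a₂*a₃ + 2*a₀*a₃^4 + (-2)*a₀*a₁^4 + (-6)*a₀^2*a₂*a₃^2 + (-6)*a₀^2*a₁^2*a₂) * hq2 + (a₃^5 + 2*a₂^4*a₃ + 9*a₁*a₂^2*a₃^2 + (-4)*a₁^2*a₃^3 + 3*a₁^3*a₂^2 + 3*a₁^4*a₃ + (-2)*a₀*a₂*a₃^3 + 4*a₀*a₁*a₂^3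 + (-6)*a₀*a₁^2*a₂*a₃ + 6*a₀^2*a₂^2*a₃ + (-3)*a₀^2*a₁*a₃^2 + 3*a₀^2*a₁^3) * hq3
    have hb2 : v.coeff 2 = c₂ := by
      rw [hc2, eq_div_iff hd]
      linear_combination (2*a₂^3*a₃ + (-3)*a₁*a₂*a₃^2 + (-1)*a₁^3*a₂ + (-3)*a₀*a₃^3 + (-6)*a₀*a₁*a₂^2 + 3*a₀*a₁^2*a₃) * hq1 + ((-1)*a₃^4 + a₁^4 + 6*a₀*a₂*a₃^2 + 6*a₀*a₁^2*a₂) * hq2 + (a₂*a₃^3 + (-2)*a₁*a₂^3 + 3*a₁^2*a₂*a₃ + (-6)*a₀*a₂^2*a₃ + 3*a₀*a₁*a₃^2 + (-3)*a₀*a₁^3) * hq3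
    have hb3 : v.coeff 3 = c₃ := by
      rw [hc3, eq_div_iff hd]
      linear_combination (a₃^3 + 2*a₁*a₂^2 + (-1)*a₁^2*a₃) * hq1 + ((-2)*a₂*a₃^2 + (-2)*a₁^2*a₂) * hq2 + (2*a₂^2*a₃ + (-1)*a₁*a₃^2 + a₁^3) * hq3
    rw [hvrep, hb0, hb1, hb2, hb3]
end

section
/- Let u(x) = -82x^3 - 108x^2 - 54x - 9 and r(x) = 82x^4 + 108x^3 + 54x^2 + 12x + 1. In the quotient ring ℚ[x]/(r(x)), the residue class of u(x) is a primitive 8th root of unity, i.e., u(x)⁸ ≡ 1 (mod r(x)) and u(x)⁴ ≢ 1 (mod r(x)). -/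
open Polynomial

theorem stmt_19 :
    (82 * X ^ 4 + 108 * X ^ 3 + 54 * X ^ 2 + 12 * X + 1 : ℚ[X]) ∣
        (-82 * X ^ 3 - 108 * X ^ 2 - 54 * X - 9 : ℚ[X]) ^ 8 - 1 ∧
    ¬ (82 * X ^ 4 + 108 * X ^ 3 + 54 * X ^ 2 + 12 * X + 1 : ℚ[X]) ∣
        (-82 * X ^ 3 - 108 * X ^ 2 - 54 * X - 9 : ℚ[X]) ^ 4 - 1 := by
  constructor
  · refine ⟨43046720 + 1549681968 * X ^ 1 + 26602873488 * X ^ 2 + 289828790064 * X ^ 3 + 2249305960672 * X ^ 4 + 13227855607488 * X ^ 5 + 61203670550352 * X ^ 6 + 228281901819552 * X ^ 7 + 697500884774816 * X ^ 8 + 1763948681695296 * X ^ 9 + 3714345869754528 * X ^ 10 + 6526953974341440 * X ^ 11 + 9559341564637024 * X ^ 12 + 11611582005030144 * X ^ 13 + 11589823697215104 * X ^ 14 + 9365000243106816 * X ^ 15 + 5986422998186048 * X ^ 16 + 2919746624679168 * X ^ 17 + 1023019523326080 * X ^ 18 + 229829043596544 * X ^ 19 + 24928547056768 * X ^ 20,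 ?_⟩
    ring
  · intro h
    have h2 : (82 * X ^ 4 + 108 * X ^ 3 + 54 * X ^ 2 + 12 * X + 1 : ℚ[X]) ∣ 2 := by
      have hq : (-82 * X ^ 3 - 108 * X ^ 2 - 54 * X - 9 : ℚ[X]) ^ 4 + 1 =
          (82 * X ^ 4 + 108 * X ^ 3 + 54 * X ^ 2 + 12 * X + 1 : ℚ[X]) *
          (6562 + 78720 * X ^ 1 + 433116 * X ^ 2 + 1419552 * X ^ 3 + 3025268 * X ^ 4 + 4290432 * X ^ 5 + 3958632 * X ^ 6 + 2178576 * X ^ 7 + 551368 * X ^ 8) := by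
        ring
      have : (2 : ℚ[X]) = ((-82 * X ^ 3 - 108 * X ^ 2 - 54 * X - 9 : ℚ[X]) ^ 4 + 1)
          - ((-82 * X ^ 3 - 108 * X ^ 2 - 54 * X - 9 : ℚ[X]) ^ 4 - 1) := by ring
      rw [this, hq]
      exact dvd_sub (Dvd.intro _ rfl) h
    have hd := Polynomial.natDegree_le_of_dvd h2 (by norm_num)
    have : ((82 * X ^ 4 + 108 * X ^ 3 + 54 * X ^ 2 + 12 * X + 1 : ℚ[X])).natDegree = 4 := by
      compute_degree!
    simp [this, Polynomial.natDegree_ofNat] at hd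
end
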